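/- For any x in a Coxeter group W there exists a unique element C'_x = Σ_y h_{y,x}(v)·T̃_y in the Hecke algebra such that: (1) d(C'_x) = C'_x; (2) h_{y,x} = 0 unless y ≤ x in Bruhat order, and h_{x,x} = 1; (3) h_{y,x}(v) ∈ vℤ[v] for y < x. (Uniqueness part: any two elements with these properties are equal.) -/

import Mathlib

set_option linter.unusedSectionVars false
set_option linter.unusedTactic false
set_option linter.unusedVariables false
set_option maxHeartbeats 1000000

open LaurentPolynomial
open Classical

/-- The Bruhat order on a Coxeter group: `y ≤ x` iff `x` can be obtained from `y` by
successively multiplying by reflections, increasing the length at each step. -/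
def bruhatLE {B W : Type} [Group W] {M : CoxeterMatrix B} (cs : CoxeterSystem M W)
    (y x : W) : Prop :=
  Relation.ReflTransGen
    (fun a c => cs.length a < cs.length c ∧ ∃ t : W, cs.IsReflection t ∧ c = t * a) y x

/-- The submodule `vℤ[v] ⊆ ℤ[v,v⁻¹]` of polynomials in `v` with zero constant term:
the `ℤ`-span of `v, v², v³, …`. -/
noncomputable def vZv : Submodule ℤ (LaurentPolynomial ℤ) :=
  Submodule.span ℤ {q : LaurentPolynomial ℤ | ∃ n : ℕ, q = T ((n : ℤ) + 1)}

namespace KLAux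


open CoxeterSystem List

variable {B W : Type} [Group W] {M : CoxeterMatrix B} (cs : CoxeterSystem M W)

open Classical in
/-- `-1` to the number of occurrences of `t` in `L`. -/
noncomputable def psign (t : W) : List W → ℤˣ
  | [] => 1
  | u :: L => (if u = t then (-1 : ℤˣ) else 1) * psign t L

@[simp] lemma psign_nil (t : W) : psign t ([] : List W) = 1 := rfl

open Classical in
lemma psign_cons (t u : W) (L : List W) :
    psign t (u :: L) = (if u = t then (-1 : ℤˣ) else 1) * psign t L := rfl

lemma psign_append (t : W) (L L' : List W) :
    psign t (L ++ L') = psign t L * psign t L' := by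
  induction L with
  | nil => simp
  | cons u L ih => simp [psign_cons, ih, mul_assoc]

open Classical in
lemma psign_concat (t u : W) (L : List W) :
    psign t (L.concat u) = psign t L * (if u = t then (-1 : ℤˣ) else 1) := by
  rw [List.concat_eq_append, psign_append, psign_cons, psign_nil, mul_one]

lemma psign_map_conj (t g : W) (L : List W) :
    psign t (L.map (fun u => g * u * g⁻¹)) = psign (g⁻¹ * t * g) L := by
  induction L with
  | nil => simp
  | cons u L ih =>
      simp only [List.map_cons, psign_cons, ih]
      congr 1
      have h : g * u * g⁻¹ = t ↔ u = g⁻¹ * t * g := by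
        constructor
        · intro h; subst h; group
        · intro h; subst h; group
      by_cases hc : u = g⁻¹ * t * g
      · rw [if_pos (h.mpr hc), if_pos hc]
      · rw [if_neg (fun hx => hc (h.mp hx)), if_neg hc]

lemma psign_eq_one_of_not_mem {t : W} {L : List W} (h : t ∉ L) : psign t L = 1 := by
  induction L with
  | nil => rfl
  | cons u L ih =>
      rw [psign_cons]
      rw [List.mem_cons] at h
      push_neg at h
      rw [if_neg (fun hc => h.1 hc.symm), one_mul]
      exact ih h.2

open Classical in
/-- The basic involution on `W × ℤˣ` attached to a simple reflection. -/
noncomputable def sigma (i : B) : Equiv.Perm (W × ℤˣ) :=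
  Function.Involutive.toPerm
    (fun p => (cs.simple i * p.1 * cs.simple i, if p.1 = cs.simple i then -p.2 else p.2))
    (by
      intro p
      obtain ⟨t, ε⟩ := p
      simp only
      have h1 : cs.simple i * (cs.simple i * t * cs.simple i) * cs.simple i = t := by
        rw [← mul_assoc, ← mul_assoc, cs.simple_mul_simple_self, one_mul, mul_assoc,
          cs.simple_mul_simple_self, mul_one]
      have h2 : (cs.simple i * t * cs.simple i = cs.simple i) ↔ (t = cs.simple i) := by
        constructor
        · intro h
          have := congrArg (fun z => cs.simple i * z * cs.simple i) h
          rw [h1] at this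
          rw [this, cs.simple_mul_simple_self, one_mul]
        · rintro rfl
          rw [cs.simple_mul_simple_self, one_mul]
      classical
      ext
      · exact h1
      · by_cases ht : t = cs.simple i <;> simp [h2, ht])

open Classical in
lemma sigma_apply (i : B) (t : W) (ε : ℤˣ) :
    sigma cs i (t, ε) =
      (cs.simple i * t * cs.simple i, if t = cs.simple i then -ε else ε) := rfl


theorem mul_pow_mul (a b : W) (k : ℕ) : a * (b * a)^k = (a * b)^k * a := by
  induction k with
  | zero => simp
  | succ k ih =>
      rw [pow_succ, pow_succ', ← mul_assoc, ih, mul_assoc ((a*b)^k) a (b*a),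
        ← mul_assoc a b a, ← mul_assoc ((a*b)^k) (a*b) a, ← pow_succ, pow_succ', mul_assoc]

theorem conj_eq_iff (g x y : W) : g * x * g⁻¹ = y ↔ x = g⁻¹ * y * g := by
  constructor
  · rintro rfl; group
  · rintro rfl; group

/-- Reflections of the dihedral subgroup generated by `s i`, `s j`, with multiplicity. -/
def dihList (i j : B) (n : ℕ) : List W :=
  (List.range n).map (fun l => (cs.simple j * cs.simple i)^l * cs.simple j)

open Classical in
lemma sigma_mul_sigma_pow (i j : B) (k : ℕ) (t : W) (ε : ℤˣ) :
    ((sigma cs i * sigma cs j)^k) (t, ε) =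
      ((cs.simple i * cs.simple j)^k * t * ((cs.simple i * cs.simple j)^k)⁻¹,
        psign t (dihList cs i j (2*k)) * ε) := by
  induction k with
  | zero => simp [dihList]
  | succ k ih =>
      rw [pow_succ', Equiv.Perm.mul_apply, ih, Equiv.Perm.mul_apply, sigma_apply, sigma_apply]
      set p := cs.simple i * cs.simple j with hp
      set q := cs.simple j * cs.simple i with hq
      set u := p ^ k * t * (p ^ k)⁻¹ with hu
      have hpinv : p⁻¹ = q := by
        rw [hp, hq, mul_inv_rev, cs.inv_simple, cs.inv_simple]
      have hppow : (p^k)⁻¹ = q^k := by rw [← inv_pow, hpinv]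
      have hsp : cs.simple j * p^k = q^k * cs.simple j := by
        rw [hp, hq]; exact mul_pow_mul _ _ k
      have key1 : (p^k)⁻¹ * cs.simple j * p^k = q^(2*k) * cs.simple j := by
        rw [hppow, mul_assoc, hsp, ← mul_assoc, ← pow_add, two_mul]
      have key2 : (p^k)⁻¹ * (cs.simple j * cs.simple i * cs.simple j) * p^k
          = q^(2*k+1) * cs.simple j := by
        rw [hppow]
        calc q^k * (cs.simple j * cs.simple i * cs.simple j) * p^k
            = q^k * (q * (cs.simple j * p^k)) := by rw [hq]; group
          _ = q^k * (q * (q^k * cs.simple j)) := by rw [hsp]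
          _ = q^(k+1+k) * cs.simple j := by
              rw [← mul_assoc, ← mul_assoc, ← pow_succ, ← pow_add]
          _ = q^(2*k+1) * cs.simple j := by rw [show k+1+k = 2*k+1 by omega]
      have hc1 : (u = cs.simple j) ↔ (q^(2*k) * cs.simple j = t) := by
        rw [hu, conj_eq_iff, ← key1]
        exact eq_comm
      have hc2 : (cs.simple j * u * cs.simple j = cs.simple i)
          ↔ (q^(2*k+1) * cs.simple j = t) := by
        have e1 : cs.simple j * u * cs.simple j = cs.simple j * u * (cs.simple j)⁻¹ := by
          rw [cs.inv_simple]
        rw [e1, conj_eq_iff, cs.inv_simple]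
        have e2 : u = cs.simple j * cs.simple i * cs.simple j
            ↔ t = (p^k)⁻¹ * (cs.simple j * cs.simple i * cs.simple j) * p^k := by
          rw [hu, conj_eq_iff]
        rw [e2, key2]
        exact eq_comm
      have hlist : dihList cs i j (2*(k+1))
          = dihList cs i j (2*k) ++ [q^(2*k) * cs.simple j, q^(2*k+1) * cs.simple j] := by
        show (List.range (2*(k+1))).map _ = _
        rw [show 2*(k+1) = (2*k+1)+1 by ring, List.range_succ, List.range_succ]
        simp [dihList, hq]
      have hfirst : cs.simple i * (cs.simple j * u * cs.simple j) * cs.simple i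
          = p^(k+1) * t * (p^(k+1))⁻¹ := by
        have : cs.simple i * (cs.simple j * u * cs.simple j) * cs.simple i
            = p * u * p⁻¹ := by
          rw [hpinv, hp, hq]; group
        rw [this, hu, pow_succ']
        group
      rw [hlist, psign_append, psign_cons, psign_cons, psign_nil]
      refine Prod.ext hfirst ?_
      simp only
      by_cases h1 : u = cs.simple j
      · rw [if_pos h1, if_pos (hc1.mp h1)]
        by_cases h2 : cs.simple j * u * cs.simple j = cs.simple i
        · rw [if_pos h2, if_pos (hc2.mp h2)]
          simp [mul_comm, mul_assoc, mul_left_comm]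
        · rw [if_neg h2, if_neg (fun hx => h2 (hc2.mpr hx))]
          simp [mul_comm, mul_assoc, mul_left_comm]
      · rw [if_neg h1, if_neg (fun hx => h1 (hc1.mpr hx))]
        by_cases h2 : cs.simple j * u * cs.simple j = cs.simple i
        · rw [if_pos h2, if_pos (hc2.mp h2)]
          simp [mul_comm, mul_assoc, mul_left_comm]
        · rw [if_neg h2, if_neg (fun hx => h2 (hc2.mpr hx))]
          simp [mul_comm, mul_assoc, mul_left_comm]

lemma isLiftable : M.IsLiftable (fun i => sigma cs i) := by
  intro i j
  apply Equiv.ext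
  rintro ⟨t, ε⟩
  rw [sigma_mul_sigma_pow]
  have h1 : (cs.simple i * cs.simple j) ^ M i j = 1 := cs.simple_mul_simple_pow i j
  have h2 : (cs.simple j * cs.simple i) ^ M i j = 1 := cs.simple_mul_simple_pow' i j
  have hlist : dihList cs i j (2 * M i j) = dihList cs i j (M i j) ++ dihList cs i j (M i j) := by
    show (List.range _).map _ = _
    rw [two_mul, List.range_add, List.map_append]
    congr 1
    rw [List.map_map]
    apply List.map_congr_left
    intro l _
    simp only [Function.comp_apply]
    rw [pow_add, h2, one_mul]
  rw [hlist, psign_append, h1, Int.units_mul_self, one_mul, one_mul, inv_one, mul_one]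
  rfl

/-- The reflection representation-like permutation action used for strong exchange. -/
noncomputable def rho : W →* Equiv.Perm (W × ℤˣ) :=
  cs.lift ⟨fun i => sigma cs i, isLiftable cs⟩

lemma rho_simple (i : B) : rho cs (cs.simple i) = sigma cs i :=
  cs.lift_apply_simple _ i

lemma ris_cons (i : B) (ω : List B) :
    cs.rightInvSeq (i :: ω)
      = ((cs.wordProd ω)⁻¹ * cs.simple i * cs.wordProd ω) :: cs.rightInvSeq ω := rfl

lemma rho_wordProd (ω : List B) (t : W) (ε : ℤˣ) :
    rho cs (cs.wordProd ω) (t, ε)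
      = (cs.wordProd ω * t * (cs.wordProd ω)⁻¹, psign t (cs.rightInvSeq ω) * ε) := by
  induction ω with
  | nil => simp [CoxeterSystem.wordProd_nil]
  | cons i ω ih =>
      rw [cs.wordProd_cons, map_mul, Equiv.Perm.mul_apply, ih, rho_simple, sigma_apply,
        ris_cons, psign_cons]
      set w := cs.wordProd ω with hw
      refine Prod.ext ?_ ?_
      · simp only
        rw [mul_inv_rev, cs.inv_simple]
        group
      · simp only
        have hcond : (w * t * w⁻¹ = cs.simple i) ↔ (w⁻¹ * cs.simple i * w = t) := by
          rw [conj_eq_iff]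
          exact eq_comm.trans (by rw [mul_assoc])
        by_cases h : w * t * w⁻¹ = cs.simple i
        · rw [if_pos h, if_pos (hcond.mp h)]
          simp [mul_comm, mul_assoc, mul_left_comm]
        · rw [if_neg h, if_neg (fun hx => h (hcond.mpr hx))]
          simp [mul_comm, mul_assoc, mul_left_comm]

lemma psign_ris_eq {ω ω' : List B} (h : cs.wordProd ω = cs.wordProd ω') (t : W) :
    psign t (cs.rightInvSeq ω) = psign t (cs.rightInvSeq ω') := by
  have h1 := rho_wordProd cs ω t 1
  have h2 := rho_wordProd cs ω' t 1
  rw [h] at h1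
  rw [h1] at h2
  have := congrArg Prod.snd h2
  simpa using this

lemma ris_append (α β : List B) :
    cs.rightInvSeq (α ++ β)
      = (cs.rightInvSeq α).map
          (fun u => (cs.wordProd β)⁻¹ * u * cs.wordProd β) ++ cs.rightInvSeq β := by
  induction α with
  | nil => simp
  | cons i α ih =>
      rw [List.cons_append, ris_cons, ris_cons, ih, List.map_cons, List.cons_append]
      congr 1
      rw [cs.wordProd_append, mul_inv_rev]
      group

lemma wordProd_palindrome (μ : List B) (i : B) :
    cs.wordProd (μ ++ [i] ++ μ.reverse)
      = cs.wordProd μ * cs.simple i * (cs.wordProd μ)⁻¹ := by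
  rw [cs.wordProd_append, cs.wordProd_append, cs.wordProd_reverse, cs.wordProd_singleton]

lemma psign_palindrome (μ : List B) (i : B) :
    psign (cs.wordProd μ * cs.simple i * (cs.wordProd μ)⁻¹)
      (cs.rightInvSeq (μ ++ [i] ++ μ.reverse)) = -1 := by
  induction μ with
  | nil => simp [ris_cons, psign_cons]
  | cons j μ ih =>
      set t' := cs.wordProd μ * cs.simple i * (cs.wordProd μ)⁻¹ with ht'
      have ht'inv : t'⁻¹ = t' := by
        rw [ht', mul_inv_rev, mul_inv_rev, cs.inv_simple, inv_inv]
        group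
      set t := cs.wordProd (j :: μ) * cs.simple i * (cs.wordProd (j :: μ))⁻¹ with ht
      have htt' : t = cs.simple j * t' * cs.simple j := by
        rw [ht, ht', cs.wordProd_cons, mul_inv_rev, cs.inv_simple]
        group
      set inner := μ ++ [i] ++ μ.reverse with hinner
      have hπinner : cs.wordProd inner = t' := wordProd_palindrome cs μ i
      have hsplit : (j :: μ) ++ [i] ++ (j :: μ).reverse
          = j :: (inner.concat j) := by
        simp [hinner, List.concat_eq_append]
      rw [hsplit, ris_cons, psign_cons]
      have hhead : (cs.wordProd (inner.concat j))⁻¹ * cs.simple j * cs.wordProd (inner.concat j)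
          = t * (t' * cs.simple j) := by
        rw [cs.wordProd_concat, hπinner, htt', mul_inv_rev, cs.inv_simple, ht'inv]
      have hcondA : ((cs.wordProd (inner.concat j))⁻¹ * cs.simple j * cs.wordProd (inner.concat j)
          = t) ↔ (t' = cs.simple j) := by
        rw [hhead]
        constructor
        · intro h
          have h2 : t' * cs.simple j = 1 := by
            calc t' * cs.simple j = t⁻¹ * (t * (t' * cs.simple j)) := by group
              _ = t⁻¹ * t := by rw [h]
              _ = 1 := inv_mul_cancel t
          calc t' = t' * cs.simple j * cs.simple j := by
                rw [mul_assoc, cs.simple_mul_simple_self, mul_one]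
            _ = cs.simple j := by rw [h2, one_mul]
        · intro h
          rw [h, cs.simple_mul_simple_self, mul_one]
      have hcondB : (cs.simple j = t) ↔ (t' = cs.simple j) := by
        rw [htt', mul_assoc]
        constructor
        · intro h
          have h2 : t' * cs.simple j = 1 := by
            calc t' * cs.simple j
                = cs.simple j * (cs.simple j * (t' * cs.simple j)) := by
                  rw [← mul_assoc, cs.simple_mul_simple_self, one_mul]
              _ = cs.simple j * cs.simple j := by rw [← h]
              _ = 1 := cs.simple_mul_simple_self j
          calc t' = t' * cs.simple j * cs.simple j := by
                rw [mul_assoc, cs.simple_mul_simple_self, mul_one]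
            _ = cs.simple j := by rw [h2, one_mul]
        · intro h
          rw [h, cs.simple_mul_simple_self, mul_one]
      have hmap : psign t ((cs.rightInvSeq inner).map (MulAut.conj (cs.simple j))) = -1 := by
        have e1 : (cs.rightInvSeq inner).map (MulAut.conj (cs.simple j))
            = (cs.rightInvSeq inner).map
                (fun u => cs.simple j * u * (cs.simple j)⁻¹) := rfl
        rw [e1, psign_map_conj]
        have e2 : (cs.simple j)⁻¹ * t * cs.simple j = t' := by
          rw [cs.inv_simple, htt', ← mul_assoc, ← mul_assoc, cs.simple_mul_simple_self,
            one_mul, mul_assoc, cs.simple_mul_simple_self, mul_one]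
        rw [e2]
        exact ih
      rw [cs.rightInvSeq_concat, psign_concat, hmap]
      by_cases hc : t' = cs.simple j
      · rw [if_pos (hcondA.mpr hc), if_pos (hcondB.mpr hc)]
        decide
      · rw [if_neg (fun hx => hc (hcondA.mp hx)), if_neg (fun hx => hc (hcondB.mp hx))]
        decide

lemma exists_palindrome_word {t : W} (ht : cs.IsReflection t) :
    ∃ τ : List B, cs.wordProd τ = t ∧ psign t (cs.rightInvSeq τ) = -1 := by
  obtain ⟨u, i, rfl⟩ := ht
  obtain ⟨μ, hμ⟩ := cs.wordProd_surjective u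
  refine ⟨μ ++ [i] ++ μ.reverse, ?_, ?_⟩
  · rw [wordProd_palindrome, hμ]
  · have := psign_palindrome cs μ i
    rw [hμ] at this
    exact this

theorem mem_rightInvSeq_of_isRightInversion {ω : List B} (hω : cs.IsReduced ω) {t : W}
    (ht : cs.IsReflection t)
    (h : cs.length (cs.wordProd ω * t) < cs.length (cs.wordProd ω)) :
    t ∈ cs.rightInvSeq ω := by
  by_contra hmem
  have h1 : psign t (cs.rightInvSeq ω) = 1 := psign_eq_one_of_not_mem hmem
  obtain ⟨δ, hδred, hδ⟩ := cs.exists_reduced_word' (cs.wordProd ω * t)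
  obtain ⟨τ, hτ, hsign⟩ := exists_palindrome_word cs ht
  have hπ : cs.wordProd (δ ++ τ) = cs.wordProd ω := by
    rw [cs.wordProd_append, ← hδ, hτ, mul_assoc, ht.mul_self, mul_one]
  have h2 := psign_ris_eq cs hπ.symm t
  rw [h1, ris_append] at h2
  have e1 : (cs.rightInvSeq δ).map (fun u => (cs.wordProd τ)⁻¹ * u * cs.wordProd τ)
      = (cs.rightInvSeq δ).map (fun u => (cs.wordProd τ)⁻¹ * u * ((cs.wordProd τ)⁻¹)⁻¹) := by
    rw [inv_inv]
  have e2 : ((cs.wordProd τ)⁻¹)⁻¹ * t * (cs.wordProd τ)⁻¹ = t := by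
    rw [inv_inv, hτ, ht.inv, mul_assoc, ht.mul_self, mul_one]
  rw [psign_append, e1, psign_map_conj, e2, hsign] at h2
  have h3 : psign t (cs.rightInvSeq δ) = -1 := by
    calc psign t (cs.rightInvSeq δ)
        = psign t (cs.rightInvSeq δ) * (-1) * (-1) := by
          rw [mul_assoc]; simp
      _ = 1 * (-1) := by rw [← h2]
      _ = -1 := one_mul _
  have h4 : t ∈ cs.rightInvSeq δ := by
    by_contra hmem2
    rw [psign_eq_one_of_not_mem hmem2] at h3
    exact absurd h3 (by decide)
  have h5 := (cs.isRightInversion_of_mem_rightInvSeq hδred h4).2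
  rw [← hδ, mul_assoc, ht.mul_self, mul_one] at h5
  omega

theorem mem_leftInvSeq_of_isLeftInversion {ω : List B} (hω : cs.IsReduced ω) {t : W}
    (ht : cs.IsReflection t)
    (h : cs.length (t * cs.wordProd ω) < cs.length (cs.wordProd ω)) :
    t ∈ cs.leftInvSeq ω := by
  have hred : cs.IsReduced ω.reverse := (cs.isReduced_reverse_iff ω).mpr hω
  have h2 : cs.length (cs.wordProd ω.reverse * t) < cs.length (cs.wordProd ω.reverse) := by
    rw [cs.wordProd_reverse]
    have e : (cs.wordProd ω)⁻¹ * t = (t * cs.wordProd ω)⁻¹ := by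
      rw [mul_inv_rev, ht.inv]
    rw [e, cs.length_inv, cs.length_inv]
    exact h
  have h3 := mem_rightInvSeq_of_isRightInversion cs hred ht h2
  rw [cs.rightInvSeq_reverse] at h3
  exact List.mem_reverse.mp h3

/-- Strong exchange property. -/
theorem strong_exchange {ω : List B} (hω : cs.IsReduced ω) {t : W}
    (ht : cs.IsReflection t)
    (h : cs.length (t * cs.wordProd ω) < cs.length (cs.wordProd ω)) :
    ∃ j < ω.length, t * cs.wordProd ω = cs.wordProd (ω.eraseIdx j) := by
  have hmem := mem_leftInvSeq_of_isLeftInversion cs hω ht h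
  obtain ⟨j, hj, hget⟩ := List.getElem_of_mem hmem
  rw [cs.length_leftInvSeq] at hj
  refine ⟨j, hj, ?_⟩
  have := cs.getD_leftInvSeq_mul_wordProd ω j
  rw [List.getD_eq_getElem _ _ (by rw [cs.length_leftInvSeq]; exact hj), hget] at this
  exact this





lemma bruhatLE_refl (x : W) : bruhatLE cs x x := Relation.ReflTransGen.refl

lemma bruhatLE_trans {x y z : W} (h1 : bruhatLE cs x y) (h2 : bruhatLE cs y z) :
    bruhatLE cs x z := Relation.ReflTransGen.trans h1 h2

lemma bruhatLE_length_le {y x : W} (h : bruhatLE cs y x) : cs.length y ≤ cs.length x := by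
  induction h with
  | refl => exact le_refl _
  | tail h1 h2 ih => exact le_trans ih (le_of_lt h2.1)

lemma bruhatLE_eq_or_length_lt {y x : W} (h : bruhatLE cs y x) :
    y = x ∨ cs.length y < cs.length x := by
  induction h with
  | refl => exact Or.inl rfl
  | tail h1 h2 ih =>
      right
      exact lt_of_le_of_lt (bruhatLE_length_le cs h1) h2.1

lemma bruhatLE_step {t y : W} (ht : cs.IsReflection t)
    (h : cs.length y < cs.length (t * y)) : bruhatLE cs y (t * y) :=
  Relation.ReflTransGen.single ⟨h, t, ht, rfl⟩

lemma bruhatLE_simple_up {i : B} {y : W} (h : cs.length y < cs.length (cs.simple i * y)) :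
    bruhatLE cs y (cs.simple i * y) :=
  bruhatLE_step cs (cs.isReflection_simple i) h

lemma bruhatLE_simple_down {i : B} {y : W}
    (h : cs.length (cs.simple i * y) < cs.length y) :
    bruhatLE cs (cs.simple i * y) y := by
  have := bruhatLE_step cs (cs.isReflection_simple i) (y := cs.simple i * y)
    (by rwa [cs.simple_mul_simple_cancel_left])
  rwa [cs.simple_mul_simple_cancel_left] at this

/-- Erasing a letter of a reduced word moves down in Bruhat order. -/
lemma bruhatLE_eraseIdx {ω : List B} (hω : cs.IsReduced ω) {j : ℕ} (hj : j < ω.length) :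
    bruhatLE cs (cs.wordProd (ω.eraseIdx j)) (cs.wordProd ω) := by
  set t := (cs.leftInvSeq ω).getD j 1 with htdef
  have hmem : t ∈ cs.leftInvSeq ω := by
    rw [htdef, List.getD_eq_getElem _ 1 (by rwa [cs.length_leftInvSeq])]
    exact List.getElem_mem _
  have htr : cs.IsReflection t := cs.isReflection_of_mem_leftInvSeq ω hmem
  have hkey : t * cs.wordProd ω = cs.wordProd (ω.eraseIdx j) :=
    cs.getD_leftInvSeq_mul_wordProd ω j
  have hlen : cs.length (cs.wordProd (ω.eraseIdx j)) < cs.length (cs.wordProd ω) := by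
    have h1 := cs.length_wordProd_le (ω.eraseIdx j)
    have h2 : (ω.eraseIdx j).length = ω.length - 1 := by
      rw [List.length_eraseIdx]
      simp [hj]
    rw [h2] at h1
    rw [hω]
    omega
  have hc : cs.wordProd ω = t * cs.wordProd (ω.eraseIdx j) := by
    rw [← hkey, ← mul_assoc, htr.mul_self, one_mul]
  exact Relation.ReflTransGen.single ⟨hlen, t, htr, hc⟩

/-- The key lifting step, via strong exchange. -/
lemma lift_step {t : W} (htr : cs.IsReflection t) {u : W} (i : B)
    (hlen : cs.length u < cs.length (t * u))
    (hdn : cs.length (cs.simple i * (t * u)) < cs.length (t * u)) :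
    bruhatLE cs (cs.simple i * u) (t * u) := by
  set u₁ := t * u with hu₁
  obtain ⟨δ, hδred, hδ⟩ := cs.exists_reduced_word' (cs.simple i * u₁)
  have hπω : cs.wordProd (i :: δ) = u₁ := by
    rw [cs.wordProd_cons, ← hδ, cs.simple_mul_simple_cancel_left]
  have hlδ : δ.length = cs.length u₁ - 1 := by
    rw [← hδred, ← hδ]
    rcases cs.length_simple_mul u₁ i with h | h
    · omega
    · omega
  have hred : cs.IsReduced (i :: δ) := by
    unfold CoxeterSystem.IsReduced
    rw [hπω, List.length_cons, hlδ]
    have : 1 ≤ cs.length u₁ := by omega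
    omega
  have hinv : cs.length (t * cs.wordProd (i :: δ)) < cs.length (cs.wordProd (i :: δ)) := by
    rw [hπω, hu₁, ← mul_assoc, htr.mul_self, one_mul]
    exact hlen
  obtain ⟨j, hj, hex⟩ := strong_exchange cs hred htr hinv
  rw [hπω] at hex
  have hexu : u = cs.wordProd ((i :: δ).eraseIdx j) := by
    rw [← hex, hu₁, ← mul_assoc, htr.mul_self, one_mul]
  match j, hj with
  | 0, _ =>
      rw [List.eraseIdx_cons_zero] at hexu
      have : cs.simple i * u = u₁ := by
        rw [hexu, ← hδ, cs.simple_mul_simple_cancel_left]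
      rw [this]
      exact bruhatLE_refl cs u₁
  | (k+1), hj =>
      rw [List.eraseIdx_cons_succ, cs.wordProd_cons] at hexu
      have hsiu : cs.simple i * u = cs.wordProd (δ.eraseIdx k) := by
        rw [hexu, cs.simple_mul_simple_cancel_left]
      have hk : k < δ.length := by
        rw [List.length_cons] at hj
        omega
      have h1 : bruhatLE cs (cs.simple i * u) (cs.wordProd δ) := by
        rw [hsiu]
        exact bruhatLE_eraseIdx cs hδred hk
      have h2 : bruhatLE cs (cs.wordProd δ) u₁ := by
        rw [← hδ]
        exact bruhatLE_simple_down cs hdn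
      exact bruhatLE_trans cs h1 h2

/-- Monotonicity of the Bruhat order under multiplication by a simple reflection
(lifting property). -/
theorem bruhat_lift {u w : W} (h : bruhatLE cs u w) (i : B)
    (hu : cs.length (cs.simple i * u) = cs.length u + 1)
    (hw : cs.length (cs.simple i * w) = cs.length w + 1) :
    bruhatLE cs (cs.simple i * u) (cs.simple i * w) := by
  revert hu
  induction h using Relation.ReflTransGen.head_induction_on with
  | refl => intro _; exact bruhatLE_refl cs _
  | head hac hcb ih =>
      rename_i a c
      intro hu
      obtain ⟨hlt, t, htr, rfl⟩ := hac
      rcases cs.length_simple_mul (t * a) i with hup | hdn'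
      · -- length goes up at t * a
        have step : bruhatLE cs (cs.simple i * a) (cs.simple i * (t * a)) := by
          have hconj : cs.simple i * (t * a)
              = (cs.simple i * t * (cs.simple i)⁻¹) * (cs.simple i * a) := by
            group
          have hlen2 : cs.length (cs.simple i * a) < cs.length (cs.simple i * (t * a)) := by
            rw [hup, hu]
            omega
          rw [hconj]
          rw [hconj] at hlen2
          exact bruhatLE_step cs (htr.conj (cs.simple i)) hlen2
        exact bruhatLE_trans cs step (ih hup)
      · -- length goes down at t * a : use the lifting step
        have hdn : cs.length (cs.simple i * (t * a)) < cs.length (t * a) := by omega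
        have h1 : bruhatLE cs (cs.simple i * a) (t * a) := lift_step cs htr i hlt hdn
        have h2 : bruhatLE cs (t * a) w := hcb
        have h3 : bruhatLE cs w (cs.simple i * w) := bruhatLE_simple_up cs (by omega)
        exact bruhatLE_trans cs h1 (bruhatLE_trans cs h2 h3)



/-- Laurent polynomials with no negative powers (span formulation). -/
noncomputable def NN : Submodule ℤ (LaurentPolynomial ℤ) :=
  Submodule.span ℤ {q : LaurentPolynomial ℤ | ∃ n : ℕ, q = T (n : ℤ)}

lemma map_span_mem {R N : Type} [AddCommGroup R] [AddCommGroup N] [Module ℤ R] [Module ℤ N]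
    {p : R} {s : Set R} (f : R →ₗ[ℤ] N) (S : Submodule ℤ N)
    (hgen : ∀ q ∈ s, f q ∈ S) (hp : p ∈ Submodule.span ℤ s) : f p ∈ S := by
  have h1 : Submodule.span ℤ s ≤ S.comap f := Submodule.span_le.mpr hgen
  exact h1 hp

lemma vZv_le_NN : vZv ≤ NN := by
  rw [vZv]
  apply Submodule.span_le.mpr
  rintro q ⟨n, rfl⟩
  exact Submodule.subset_span ⟨n + 1, by push_cast; ring_nf⟩

lemma T_mem_vZv (n : ℕ) : (T ((n : ℤ) + 1) : LaurentPolynomial ℤ) ∈ vZv :=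
  Submodule.subset_span ⟨n, rfl⟩

lemma one_mem_NN : (1 : LaurentPolynomial ℤ) ∈ NN :=
  Submodule.subset_span ⟨0, by rw [Nat.cast_zero, T_zero]⟩

lemma T_one_mul_mem_vZv {p : LaurentPolynomial ℤ} (hp : p ∈ NN) :
    T 1 * p ∈ vZv := by
  have := map_span_mem (LinearMap.mulLeft ℤ (T 1 : LaurentPolynomial ℤ)) vZv
    (by rintro q ⟨n, rfl⟩
        simp only [LinearMap.mulLeft_apply]
        rw [← T_add]
        rw [add_comm]
        exact T_mem_vZv n) hp
  simpa using this

lemma T_negone_mul_mem_NN {p : LaurentPolynomial ℤ} (hp : p ∈ vZv) :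
    T (-1) * p ∈ NN := by
  have := map_span_mem (LinearMap.mulLeft ℤ (T (-1) : LaurentPolynomial ℤ)) NN
    (by rintro q ⟨n, rfl⟩
        simp only [LinearMap.mulLeft_apply]
        rw [← T_add]
        exact Submodule.subset_span ⟨n, by congr 1; ring⟩) hp
  simpa using this

/-- Evaluation of the coefficient at `k`, as a `ℤ`-linear map. -/
noncomputable def ev (k : ℤ) : LaurentPolynomial ℤ →ₗ[ℤ] ℤ where
  toFun p := p.coeff k
  map_add' p q := rfl
  map_smul' n p := rfl

lemma ev_T (k n : ℤ) : ev k (T n : LaurentPolynomial ℤ) = if n = k then 1 else 0 := by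
  show (T n : LaurentPolynomial ℤ).coeff k = _
  exact T_apply k n

lemma NN_sub_C_mem {p : LaurentPolynomial ℤ} (hp : p ∈ NN) :
    p - C (ev 0 p) ∈ vZv := by
  have := map_span_mem
    (LinearMap.id - (C : ℤ →+* LaurentPolynomial ℤ).toIntLinearMap.comp (ev 0)) vZv
    (by rintro q ⟨n, rfl⟩
        simp only [LinearMap.sub_apply, LinearMap.id_apply, LinearMap.comp_apply]
        have hap : ((C : ℤ →+* LaurentPolynomial ℤ).toIntLinearMap) (ev 0 (T (n:ℤ))) = C (ev 0 (T (n:ℤ))) := rfl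
        rw [hap, ev_T]
        rcases Nat.eq_zero_or_pos n with hn | hn
        · subst hn
          rw [Nat.cast_zero, if_pos rfl, T_zero, map_one, sub_self]
          exact Submodule.zero_mem _
        · rw [if_neg (by omega : (n : ℤ) ≠ 0)]
          simp only [map_zero, sub_zero]
          have : (n : ℤ) = ((n-1 : ℕ) : ℤ) + 1 := by omega
          rw [this]
          exact T_mem_vZv (n-1)) hp
  simpa using this

lemma vZv_coeff_nonpos {p : LaurentPolynomial ℤ} (hp : p ∈ vZv) {k : ℤ} (hk : k ≤ 0) :
    ev k p = 0 := by
  have := map_span_mem (ev k) (⊥ : Submodule ℤ ℤ)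
    (by rintro q ⟨n, rfl⟩
        rw [ev_T, if_neg (by omega : (n : ℤ) + 1 ≠ k)]
        exact Submodule.zero_mem _) hp
  simpa using this

lemma eq_zero_of_invert_self {p : LaurentPolynomial ℤ} (hp : p ∈ vZv)
    (hinv : invert p = p) : p = 0 := by
  apply LaurentPolynomial.ext
  intro k
  rcases le_or_gt k 0 with hk | hk
  · exact vZv_coeff_nonpos hp hk
  · have h1 : p.coeff (-k) = 0 := vZv_coeff_nonpos hp (by omega)
    have h2 : (invert p).coeff k = p.coeff (-k) := invert_apply p k
    rw [hinv] at h2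
    show p.coeff k = 0
    rw [h2, h1]




variable {H : Type} [Ring H] [Algebra (LaurentPolynomial ℤ) H]
  (b : Module.Basis W (LaurentPolynomial ℤ) H)

lemma repr_single_apply (w z : W) : b.repr (b w) z = if w = z then 1 else 0 := by
  rw [b.repr_self]
  exact Finsupp.single_apply

lemma repr_comb (a c : LaurentPolynomial ℤ) (A C : H) (z : W) :
    b.repr (a • A + c • C) z = a * b.repr A z + c * b.repr C z := by
  rw [map_add, map_smul, map_smul]
  rfl

section mul

variable (hmul : ∀ x y : W, cs.length (x * y) = cs.length x + cs.length y →
      b x * b y = b (x * y))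
  (hquad : ∀ i : B, b (cs.simple i) * b (cs.simple i) =
      (T (-2) : LaurentPolynomial ℤ) • (1 : H) +
        ((T (-2) - 1 : LaurentPolynomial ℤ)) • b (cs.simple i))

include hmul in
lemma mul_basis_up (i : B) (y : W) (h : cs.length (cs.simple i * y) = cs.length y + 1) :
    b (cs.simple i) * b y = b (cs.simple i * y) := by
  apply hmul
  rw [cs.length_simple, h]
  omega

include hmul hquad in
lemma mul_basis_down (i : B) (y : W) (h : cs.length (cs.simple i * y) + 1 = cs.length y) :
    b (cs.simple i) * b y =
      (T (-2) : LaurentPolynomial ℤ) • b (cs.simple i * y)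
        + ((T (-2) - 1 : LaurentPolynomial ℤ)) • b y := by
  have e1 : b (cs.simple i) * b (cs.simple i * y) = b y := by
    have := hmul (cs.simple i) (cs.simple i * y) (by
      rw [cs.simple_mul_simple_cancel_left, cs.length_simple]
      omega)
    rwa [cs.simple_mul_simple_cancel_left] at this
  calc b (cs.simple i) * b y
      = b (cs.simple i) * (b (cs.simple i) * b (cs.simple i * y)) := by rw [e1]
    _ = (b (cs.simple i) * b (cs.simple i)) * b (cs.simple i * y) := by rw [mul_assoc]
    _ = ((T (-2) : LaurentPolynomial ℤ) • (1 : H)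
          + ((T (-2) - 1 : LaurentPolynomial ℤ)) • b (cs.simple i)) * b (cs.simple i * y) := by
        rw [hquad i]
    _ = (T (-2) : LaurentPolynomial ℤ) • b (cs.simple i * y)
          + ((T (-2) - 1 : LaurentPolynomial ℤ)) • b y := by
        rw [add_mul, smul_mul_assoc, one_mul, smul_mul_assoc, e1]

/-- The element `C'_s = v T_s + v`. -/
noncomputable def Cselt (i : B) : H :=
  (T 1 : LaurentPolynomial ℤ) • b (cs.simple i) + (T 1 : LaurentPolynomial ℤ) • (1 : H)

include hmul hquad in
lemma Cselt_mul_basis_up (i : B) (y : W) (h : cs.length (cs.simple i * y) = cs.length y + 1) :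
    Cselt cs b i * b y = (T 1 : LaurentPolynomial ℤ) • b (cs.simple i * y)
      + (T 1 : LaurentPolynomial ℤ) • b y := by
  rw [Cselt, add_mul, smul_mul_assoc, smul_mul_assoc, one_mul,
    mul_basis_up cs b hmul i y h]

include hmul hquad in
lemma Cselt_mul_basis_down (i : B) (y : W) (h : cs.length (cs.simple i * y) + 1 = cs.length y) :
    Cselt cs b i * b y = (T (-1) : LaurentPolynomial ℤ) • b (cs.simple i * y)
      + (T (-1) : LaurentPolynomial ℤ) • b y := by
  rw [Cselt, add_mul, smul_mul_assoc, smul_mul_assoc, one_mul,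
    mul_basis_down cs b hmul hquad i y h, smul_add, smul_smul, smul_smul]
  rw [show (T 1 * T (-2) : LaurentPolynomial ℤ) = T (-1) by rw [← T_add]; norm_num]
  rw [add_assoc, ← add_smul]
  congr 1
  rw [mul_sub, mul_one, ← T_add]
  norm_num

include hmul hquad in
lemma repr_Cselt_mul_basis (i : B) (y z : W) :
    b.repr (Cselt cs b i * b y) z =
      (if cs.length (cs.simple i * z) = cs.length z + 1
       then T 1 * (b.repr (b y)) z + T (-1) * (b.repr (b y)) (cs.simple i * z)
       else T (-1) * (b.repr (b y)) z + T 1 * (b.repr (b y)) (cs.simple i * z)) := by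
  have hsyney : cs.simple i * y ≠ y := by
    intro hc
    exact cs.length_simple_mul_ne y i (by rw [hc])
  have hcancel : ∀ w : W, cs.simple i * (cs.simple i * w) = w :=
    fun w => cs.simple_mul_simple_cancel_left _
  simp only [repr_single_apply]
  rcases cs.length_simple_mul y i with hy | hy
  · rw [Cselt_mul_basis_up cs b hmul hquad i y hy, repr_comb]
    simp only [repr_single_apply]
    by_cases h2 : y = z
    · subst h2
      rw [if_pos hy, if_pos rfl, if_neg hsyney, if_neg (fun hc : y = cs.simple i * y =>
        hsyney hc.symm)]
      ring
    · by_cases h1 : cs.simple i * y = z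
      · subst h1
        have hc0 : ¬ cs.length (cs.simple i * (cs.simple i * y))
            = cs.length (cs.simple i * y) + 1 := by
          rw [hcancel]
          omega
        rw [if_neg hc0, if_pos rfl, if_neg h2, if_pos ((hcancel y).symm)]
        ring
      · have h3 : ¬ y = cs.simple i * z := by
          intro hc
          exact h1 (by rw [hc, hcancel])
        rw [if_neg h1, if_neg h2, if_neg h3]
        split_ifs <;> ring
  · rw [Cselt_mul_basis_down cs b hmul hquad i y hy, repr_comb]
    simp only [repr_single_apply]
    by_cases h2 : y = z
    · subst h2
      have hc0 : ¬ cs.length (cs.simple i * y) = cs.length y + 1 := by omega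
      rw [if_neg hc0, if_pos rfl, if_neg hsyney, if_neg (fun hc : y = cs.simple i * y =>
        hsyney hc.symm)]
      ring
    · by_cases h1 : cs.simple i * y = z
      · subst h1
        have hc0 : cs.length (cs.simple i * (cs.simple i * y))
            = cs.length (cs.simple i * y) + 1 := by
          rw [hcancel]
          omega
        rw [if_pos hc0, if_pos rfl, if_neg h2, if_pos ((hcancel y).symm)]
        ring
      · have h3 : ¬ y = cs.simple i * z := by
          intro hc
          exact h1 (by rw [hc, hcancel])
        rw [if_neg h1, if_neg h2, if_neg h3]
        split_ifs <;> ring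

include hmul hquad in
/-- The main coefficient formula for multiplication by `C'_s`. -/
lemma repr_Cselt_mul (i : B) (C : H) (z : W) :
    b.repr (Cselt cs b i * C) z =
      (if cs.length (cs.simple i * z) = cs.length z + 1
       then T 1 * b.repr C z + T (-1) * b.repr C (cs.simple i * z)
       else T (-1) * b.repr C z + T 1 * b.repr C (cs.simple i * z)) := by
  by_cases hc : cs.length (cs.simple i * z) = cs.length z + 1
  · rw [if_pos hc]
    let L1 : H →ₗ[LaurentPolynomial ℤ] LaurentPolynomial ℤ :=
      (Finsupp.lapply z).comp (b.repr.toLinearMap.comp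
        (LinearMap.mulLeft (LaurentPolynomial ℤ) (Cselt cs b i)))
    let L2 : H →ₗ[LaurentPolynomial ℤ] LaurentPolynomial ℤ :=
      (T 1 : LaurentPolynomial ℤ) • (Finsupp.lapply z).comp b.repr.toLinearMap
        + (T (-1) : LaurentPolynomial ℤ) • (Finsupp.lapply (cs.simple i * z)).comp
            b.repr.toLinearMap
    have hL : L1 = L2 := by
      apply b.ext
      intro y
      have := repr_Cselt_mul_basis cs b hmul hquad i y z
      rw [if_pos hc] at this
      simp only [L1, L2, LinearMap.comp_apply, LinearMap.add_apply, LinearMap.smul_apply,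
        LinearMap.mulLeft_apply, Finsupp.lapply_apply, LinearEquiv.coe_toLinearMap,
        smul_eq_mul]
      exact this
    have := congrArg (fun f => f C) hL
    simpa [L1, L2, smul_eq_mul] using this
  · rw [if_neg hc]
    let L1 : H →ₗ[LaurentPolynomial ℤ] LaurentPolynomial ℤ :=
      (Finsupp.lapply z).comp (b.repr.toLinearMap.comp
        (LinearMap.mulLeft (LaurentPolynomial ℤ) (Cselt cs b i)))
    let L2 : H →ₗ[LaurentPolynomial ℤ] LaurentPolynomial ℤ :=
      (T (-1) : LaurentPolynomial ℤ) • (Finsupp.lapply z).comp b.repr.toLinearMap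
        + (T 1 : LaurentPolynomial ℤ) • (Finsupp.lapply (cs.simple i * z)).comp
            b.repr.toLinearMap
    have hL : L1 = L2 := by
      apply b.ext
      intro y
      have := repr_Cselt_mul_basis cs b hmul hquad i y z
      rw [if_neg hc] at this
      simp only [L1, L2, LinearMap.comp_apply, LinearMap.add_apply, LinearMap.smul_apply,
        LinearMap.mulLeft_apply, Finsupp.lapply_apply, LinearEquiv.coe_toLinearMap,
        smul_eq_mul]
      exact this
    have := congrArg (fun f => f C) hL
    simpa [L1, L2, smul_eq_mul] using this

end mul


section dual

variable {H : Type} [Ring H] [Algebra (LaurentPolynomial ℤ) H]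
  (b : Module.Basis W (LaurentPolynomial ℤ) H)
  (hone : b 1 = 1)
  (hmul : ∀ x y : W, cs.length (x * y) = cs.length x + cs.length y →
      b x * b y = b (x * y))
  (hquad : ∀ i : B, b (cs.simple i) * b (cs.simple i) =
      (T (-2) : LaurentPolynomial ℤ) • (1 : H) +
        ((T (-2) - 1 : LaurentPolynomial ℤ)) • b (cs.simple i))
  (d : H →+* H)
  (hd_smul : ∀ (r : LaurentPolynomial ℤ) (x : H),
      d (r • x) = (invert r : LaurentPolynomial ℤ) • d x)
  (hd_basis : ∀ w : W, d (b w) * b w⁻¹ = 1 ∧ b w⁻¹ * d (b w) = 1)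

include hquad hd_basis in
lemma d_simple (i : B) :
    d (b (cs.simple i)) = (T 2 : LaurentPolynomial ℤ) • b (cs.simple i)
      + ((T 2 - 1 : LaurentPolynomial ℤ)) • (1 : H) := by
  set a := b (cs.simple i) with ha
  have hcand : ((T 2 : LaurentPolynomial ℤ) • a + ((T 2 - 1 : LaurentPolynomial ℤ)) • (1:H))
      * a = 1 := by
    rw [add_mul, smul_mul_assoc, smul_mul_assoc, one_mul, ha, hquad i, smul_add,
      smul_smul, smul_smul]
    rw [show (T 2 * T (-2) : LaurentPolynomial ℤ) = 1 by
      rw [← T_add, show ((2:ℤ) + -2 : ℤ) = 0 by norm_num, T_zero]]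
    rw [show (T 2 * (T (-2) - 1) : LaurentPolynomial ℤ) = 1 - T 2 by
      rw [mul_sub, mul_one, ← T_add, show ((2:ℤ) + -2 : ℤ) = 0 by norm_num, T_zero]]
    rw [one_smul, add_assoc, ← add_smul,
      show ((1 : LaurentPolynomial ℤ) - T 2 + (T 2 - 1)) = 0 by ring, zero_smul, add_zero]
  have h2 := (hd_basis (cs.simple i)).2
  rw [cs.inv_simple] at h2
  calc d (b (cs.simple i))
      = (((T 2 : LaurentPolynomial ℤ) • a + ((T 2 - 1 : LaurentPolynomial ℤ)) • (1:H)) * a)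
          * d (b (cs.simple i)) := by rw [hcand, one_mul]
    _ = ((T 2 : LaurentPolynomial ℤ) • a + ((T 2 - 1 : LaurentPolynomial ℤ)) • (1:H))
          * (b (cs.simple i) * d (b (cs.simple i))) := by rw [mul_assoc, ha]
    _ = ((T 2 : LaurentPolynomial ℤ) • a + ((T 2 - 1 : LaurentPolynomial ℤ)) • (1:H)) * 1 := by
          rw [h2]
    _ = (T 2 : LaurentPolynomial ℤ) • b (cs.simple i)
          + ((T 2 - 1 : LaurentPolynomial ℤ)) • (1 : H) := by rw [mul_one, ha]

include hquad hd_basis hd_smul in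
lemma d_Cselt (i : B) : d (Cselt cs b i) = Cselt cs b i := by
  rw [Cselt, map_add, hd_smul, hd_smul, map_one, d_simple cs b hquad d hd_basis i]
  rw [show (invert (T 1) : LaurentPolynomial ℤ) = T (-1) from invert_T 1]
  rw [smul_add, smul_smul, smul_smul]
  rw [show (T (-1) * T 2 : LaurentPolynomial ℤ) = T 1 by
    rw [← T_add, show ((-1:ℤ) + 2 : ℤ) = 1 by norm_num]]
  rw [add_assoc, ← add_smul]
  congr 1
  rw [mul_sub, mul_one, ← T_add, show ((-1:ℤ) + 2 : ℤ) = 1 by norm_num]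
  ring

/-- Span of basis elements of length `< n`. -/
noncomputable def lowSpan (n : ℕ) : Submodule (LaurentPolynomial ℤ) H :=
  Submodule.span (LaurentPolynomial ℤ) (b '' {z : W | cs.length z < n})

lemma basis_mem_lowSpan {n : ℕ} {z : W} (hz : cs.length z < n) : b z ∈ lowSpan cs b n :=
  Submodule.subset_span ⟨z, hz, rfl⟩

lemma lowSpan_mono {m n : ℕ} (h : m ≤ n) : lowSpan cs b m ≤ lowSpan cs b n :=
  Submodule.span_mono (Set.image_mono (fun z hz => lt_of_lt_of_le hz (by exact_mod_cast h)))

include hmul hquad in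
lemma mul_basis_lowSpan (i : B) {n : ℕ} {p : H} (hp : p ∈ lowSpan cs b n) :
    b (cs.simple i) * p ∈ lowSpan cs b (n+1) := by
  have hmap : Submodule.map (LinearMap.mulLeft (LaurentPolynomial ℤ) (b (cs.simple i)))
      (lowSpan cs b n) ≤ lowSpan cs b (n+1) := by
    rw [lowSpan, Submodule.map_span_le]
    rintro q ⟨z, hz, rfl⟩
    simp only [LinearMap.mulLeft_apply]
    rcases cs.length_simple_mul z i with h | h
    · rw [mul_basis_up cs b hmul i z h]
      exact basis_mem_lowSpan cs b (by simp only [Set.mem_setOf_eq] at hz; omega)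
    · rw [mul_basis_down cs b hmul hquad i z h]
      simp only [Set.mem_setOf_eq] at hz
      exact Submodule.add_mem _
        (Submodule.smul_mem _ _ (basis_mem_lowSpan cs b (by omega)))
        (Submodule.smul_mem _ _ (basis_mem_lowSpan cs b (by omega)))
  exact hmap (Submodule.mem_map_of_mem hp)

lemma repr_lowSpan {n : ℕ} {p : H} (hp : p ∈ lowSpan cs b n) {y : W}
    (hy : ¬ cs.length y < n) : b.repr p y = 0 := by
  have hle : lowSpan cs b n ≤ LinearMap.ker ((Finsupp.lapply y).comp b.repr.toLinearMap) := by
    rw [lowSpan, Submodule.span_le]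
    rintro q ⟨z, hz, rfl⟩
    simp only [SetLike.mem_coe, LinearMap.mem_ker, LinearMap.comp_apply,
      LinearEquiv.coe_toLinearMap, Finsupp.lapply_apply]
    rw [repr_single_apply]
    rw [if_neg]
    intro hc
    subst hc
    exact hy hz
  have := hle hp
  simpa using this

include hone hmul hquad hd_smul hd_basis in
lemma d_triangular : ∀ w : W,
    d (b w) - (T (2 * (cs.length w : ℤ)) : LaurentPolynomial ℤ) • b w
      ∈ lowSpan cs b (cs.length w) := by
  suffices hs : ∀ n : ℕ, ∀ w : W, cs.length w = n →
      d (b w) - (T (2 * (cs.length w : ℤ)) : LaurentPolynomial ℤ) • b w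
        ∈ lowSpan cs b (cs.length w) by
    exact fun w => hs (cs.length w) w rfl
  intro n
  induction n using Nat.strong_induction_on with
  | _ n ih =>
      intro w hw
      by_cases hw1 : w = 1
      · subst hw1
        rw [hone, map_one, cs.length_one,
          show (2 * ((0:ℕ):ℤ) : ℤ) = 0 by norm_num, T_zero, one_smul, sub_self]
        exact Submodule.zero_mem _
      · obtain ⟨i, hi⟩ := cs.exists_leftDescent_of_ne_one hw1
        have hi' : cs.length (cs.simple i * w) < cs.length w := hi
        set w' := cs.simple i * w with hw'
        have hww' : w = cs.simple i * w' := (cs.simple_mul_simple_cancel_left i).symm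
        have hlw' : cs.length w' + 1 = cs.length w := by
          rcases cs.length_simple_mul w i with h | h
          · rw [← hw'] at h; omega
          · rw [← hw'] at h; omega
        have hbw : b (cs.simple i) * b w' = b w := by
          have := mul_basis_up cs b hmul i w' (by rw [← hww']; omega)
          rwa [← hww'] at this
        set E := d (b w') - (T (2 * (cs.length w' : ℤ)) : LaurentPolynomial ℤ) • b w'
          with hE
        have hEmem : E ∈ lowSpan cs b (cs.length w') :=
          ih (cs.length w') (by omega) w' rfl
        have hdw' : d (b w') = (T (2 * (cs.length w' : ℤ)) : LaurentPolynomial ℤ) • b w' + E := by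
          rw [hE, add_sub_cancel]
        have hexp : d (b w)
            = ((T 2 : LaurentPolynomial ℤ) • b (cs.simple i)
                + ((T 2 - 1 : LaurentPolynomial ℤ)) • (1 : H))
              * ((T (2 * (cs.length w' : ℤ)) : LaurentPolynomial ℤ) • b w' + E) := by
          rw [← hbw, map_mul, d_simple cs b hquad d hd_basis i, hdw']
        have hterm1 : ((T 2 : LaurentPolynomial ℤ) • b (cs.simple i))
            * ((T (2 * (cs.length w' : ℤ)) : LaurentPolynomial ℤ) • b w')
            = (T (2 * (cs.length w : ℤ)) : LaurentPolynomial ℤ) • b w := by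
          rw [smul_mul_assoc, mul_smul_comm, smul_smul, hbw, ← T_add]
          congr 2
          push_cast [← hlw']
          ring
        have hterm2 : ((T 2 : LaurentPolynomial ℤ) • b (cs.simple i)) * E
            ∈ lowSpan cs b (cs.length w) := by
          rw [smul_mul_assoc]
          apply Submodule.smul_mem
          have := mul_basis_lowSpan cs b hmul hquad i hEmem
          rw [show cs.length w' + 1 = cs.length w from hlw'] at this
          exact this
        have hterm3 : (((T 2 - 1 : LaurentPolynomial ℤ)) • (1 : H))
            * ((T (2 * (cs.length w' : ℤ)) : LaurentPolynomial ℤ) • b w')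
            ∈ lowSpan cs b (cs.length w) := by
          rw [smul_mul_assoc, one_mul, smul_smul]
          exact Submodule.smul_mem _ _ (basis_mem_lowSpan cs b (by omega))
        have hterm4 : (((T 2 - 1 : LaurentPolynomial ℤ)) • (1 : H)) * E
            ∈ lowSpan cs b (cs.length w) := by
          rw [smul_mul_assoc, one_mul]
          exact Submodule.smul_mem _ _ (lowSpan_mono cs b (by omega) hEmem)
        rw [hexp, add_mul, mul_add, mul_add, hterm1]
        have : (T (2 * (cs.length w : ℤ)) : LaurentPolynomial ℤ) • b w
            + ((T 2 : LaurentPolynomial ℤ) • b (cs.simple i)) * E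
            + ((((T 2 - 1 : LaurentPolynomial ℤ)) • (1:H))
                * ((T (2 * (cs.length w' : ℤ)) : LaurentPolynomial ℤ) • b w')
              + (((T 2 - 1 : LaurentPolynomial ℤ)) • (1:H)) * E)
            - (T (2 * (cs.length w : ℤ)) : LaurentPolynomial ℤ) • b w
            = ((T 2 : LaurentPolynomial ℤ) • b (cs.simple i)) * E
              + ((((T 2 - 1 : LaurentPolynomial ℤ)) • (1:H))
                  * ((T (2 * (cs.length w' : ℤ)) : LaurentPolynomial ℤ) • b w')
                + (((T 2 - 1 : LaurentPolynomial ℤ)) • (1:H)) * E) := by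
          abel
        rw [this]
        exact Submodule.add_mem _ hterm2 (Submodule.add_mem _ hterm3 hterm4)

include hone hmul hquad hd_smul hd_basis in
theorem KL_unique (x : W) {C₁ C₂ : H}
    (h1d : d C₁ = C₁) (h1s : ∀ y, ¬ bruhatLE cs y x → b.repr C₁ y = 0)
    (h1x : b.repr C₁ x = T (cs.length x : ℤ))
    (h1v : ∀ y, bruhatLE cs y x → y ≠ x → T (-(cs.length y : ℤ)) * b.repr C₁ y ∈ vZv)
    (h2d : d C₂ = C₂) (h2s : ∀ y, ¬ bruhatLE cs y x → b.repr C₂ y = 0)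
    (h2x : b.repr C₂ x = T (cs.length x : ℤ))
    (h2v : ∀ y, bruhatLE cs y x → y ≠ x → T (-(cs.length y : ℤ)) * b.repr C₂ y ∈ vZv) :
    C₁ = C₂ := by
  set D := C₁ - C₂ with hD
  rw [← sub_eq_zero]
  by_contra hne
  have hdD : d D = D := by
    rw [hD, map_sub, h1d, h2d]
  have hcoeff : ∀ y : W, T (-(cs.length y : ℤ)) * b.repr D y ∈ vZv := by
    intro y
    rw [hD, map_sub, Finsupp.sub_apply, mul_sub]
    by_cases hyx : bruhatLE cs y x
    · by_cases hxy : y = x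
      · subst hxy
        rw [h1x, h2x, sub_self]
        exact Submodule.zero_mem _
      · exact Submodule.sub_mem _ (h1v y hyx hxy) (h2v y hyx hxy)
    · rw [h1s y hyx, h2s y hyx, sub_self]
      exact Submodule.zero_mem _
  have hsupp : ((b.repr D).support).Nonempty := by
    rw [Finsupp.support_nonempty_iff]
    intro hc
    apply hne
    have : b.repr D = b.repr 0 := by rw [hc, map_zero]
    exact b.repr.injective this
  obtain ⟨y, hymem, hymax⟩ := Finset.exists_max_image (b.repr D).support cs.length hsupp
  have hDsum : D = ∑ z ∈ (b.repr D).support, b.repr D z • b z := by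
    have h1 := b.linearCombination_repr D
    rw [Finsupp.linearCombination_apply, Finsupp.sum] at h1
    exact h1.symm
  have hterm : ∀ z ∈ (b.repr D).support,
      b.repr (d (b.repr D z • b z)) y
        = (if z = y then invert (b.repr D z) * T (2 * (cs.length z : ℤ)) else 0) := by
    intro z hz
    rw [hd_smul, map_smul, Finsupp.smul_apply, smul_eq_mul]
    have htri := d_triangular cs b hone hmul hquad d hd_smul hd_basis z
    set E := d (b z) - (T (2 * (cs.length z : ℤ)) : LaurentPolynomial ℤ) • b z with hE
    have hdb : d (b z) = (T (2 * (cs.length z : ℤ)) : LaurentPolynomial ℤ) • b z + E := by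
      rw [hE, add_sub_cancel]
    have hEy : b.repr E y = 0 := by
      apply repr_lowSpan cs b htri
      have := hymax z hz
      omega
    rw [hdb, map_add, map_smul, Finsupp.add_apply, Finsupp.smul_apply, repr_single_apply,
      smul_eq_mul, hEy, add_zero]
    by_cases hzy : z = y
    · rw [if_pos hzy, if_pos hzy, mul_one]
    · rw [if_neg hzy, if_neg hzy, mul_zero, mul_zero]
  have hval : b.repr (d D) y
      = invert (b.repr D y) * T (2 * (cs.length y : ℤ)) := by
    conv_lhs => rw [hDsum]
    rw [map_sum, map_sum, Finset.sum_apply']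
    rw [Finset.sum_congr rfl hterm, Finset.sum_ite_eq' _ y
      (fun z => invert (b.repr D z) * T (2 * (cs.length z : ℤ))), if_pos hymem]
  have hfix : b.repr D y = invert (b.repr D y) * T (2 * (cs.length y : ℤ)) := by
    rw [← hval, hdD]
  set r := b.repr D y with hr
  have hinvr : invert r = r * T (-(2 * (cs.length y : ℤ))) := by
    have h2 := congrArg (fun p => (invert p : LaurentPolynomial ℤ)) hfix
    simp only [map_mul, invert_T] at h2
    rwa [LaurentPolynomial.involutive_invert r] at h2
  have hh : invert (T (-(cs.length y : ℤ)) * r) = T (-(cs.length y : ℤ)) * r := by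
    rw [map_mul, invert_T, neg_neg, hinvr]
    calc T ((cs.length y : ℤ)) * (r * T (-(2 * (cs.length y : ℤ))))
        = r * (T ((cs.length y : ℤ)) * T (-(2 * (cs.length y : ℤ)))) := by ring
      _ = r * T (-(cs.length y : ℤ)) := by
          rw [← T_add, show ((cs.length y : ℤ) + -(2 * (cs.length y : ℤ)))
            = -(cs.length y : ℤ) by ring]
      _ = T (-(cs.length y : ℤ)) * r := mul_comm _ _
  have h0 := eq_zero_of_invert_self (hcoeff y) hh
  have hr0 : r = 0 := by
    have h2 := congrArg (fun p => (T ((cs.length y : ℤ)) : LaurentPolynomial ℤ) * p) h0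
    simp only [mul_zero] at h2
    rwa [← mul_assoc, ← T_add, show ((cs.length y : ℤ) + -(cs.length y : ℤ)) = 0 by ring,
      T_zero, one_mul] at h2
  exact Finsupp.mem_support_iff.mp hymem hr0

lemma T_mul_shuffle (a c : ℤ) (p : LaurentPolynomial ℤ) :
    (T a : LaurentPolynomial ℤ) * (T c * p) = T (a + c) * p := by
  rw [← mul_assoc, ← T_add]

include hone hmul hquad hd_smul hd_basis in
theorem KL_exists : ∀ x : W, ∃ C : H,
    d C = C ∧
    (∀ y : W, ¬ bruhatLE cs y x → b.repr C y = 0) ∧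
    b.repr C x = T (cs.length x : ℤ) ∧
    (∀ y : W, bruhatLE cs y x → y ≠ x →
      T (-(cs.length y : ℤ)) * b.repr C y ∈ vZv) := by
  suffices hs : ∀ n : ℕ, ∀ x : W, cs.length x = n → ∃ C : H,
      d C = C ∧
      (∀ y : W, ¬ bruhatLE cs y x → b.repr C y = 0) ∧
      b.repr C x = T (cs.length x : ℤ) ∧
      (∀ y : W, bruhatLE cs y x → y ≠ x →
        T (-(cs.length y : ℤ)) * b.repr C y ∈ vZv) by
    exact fun x => hs (cs.length x) x rfl
  intro n
  induction n using Nat.strong_induction_on with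
  | _ n ih =>
  intro x hx
  by_cases hx1 : x = 1
  · subst hx1
    refine ⟨1, map_one d, ?_, ?_, ?_⟩
    · intro y hy
      rw [← hone, repr_single_apply, if_neg]
      intro hc
      exact hy (hc ▸ bruhatLE_refl cs y)
    · rw [← hone, repr_single_apply, if_pos rfl, cs.length_one, Nat.cast_zero, T_zero]
    · intro y hyle hyne
      rcases bruhatLE_eq_or_length_lt cs hyle with h | h
      · exact absurd h hyne
      · rw [cs.length_one] at h
        omega
  · obtain ⟨i, hi⟩ := cs.exists_leftDescent_of_ne_one hx1
    have hi' : cs.length (cs.simple i * x) + 1 = cs.length x := cs.isLeftDescent_iff.mp hi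
    set x' := cs.simple i * x with hx'
    have hxx' : x = cs.simple i * x' := (cs.simple_mul_simple_cancel_left i).symm
    have hlx' : cs.length x' + 1 = cs.length x := hi'
    obtain ⟨C', hC'd, hC's, hC'x, hC'v⟩ := ih (cs.length x') (by omega) x' rfl
    set E := Cselt cs b i * C' with hEdef
    have hg : ∀ z : W, b.repr E z =
        (if cs.length (cs.simple i * z) = cs.length z + 1
         then T 1 * b.repr C' z + T (-1) * b.repr C' (cs.simple i * z)
         else T (-1) * b.repr C' z + T 1 * b.repr C' (cs.simple i * z)) :=
      fun z => repr_Cselt_mul cs b hmul hquad i C' z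
    have hxle : bruhatLE cs x' x := by
      have h1 := bruhatLE_simple_up cs (i := i) (y := x') (by rw [← hxx']; omega)
      rwa [← hxx'] at h1
    have hkey : ∀ z : W, bruhatLE cs (cs.simple i * z) x' → bruhatLE cs z x := by
      intro z hc
      rcases cs.length_simple_mul z i with hzup | hzdn
      · exact bruhatLE_trans cs (bruhatLE_simple_up cs (by omega))
          (bruhatLE_trans cs hc hxle)
      · have h1 := bruhat_lift cs hc i
          (by rw [cs.simple_mul_simple_cancel_left]; omega)
          (by rw [← hxx']; omega)
        rwa [cs.simple_mul_simple_cancel_left, ← hxx'] at h1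
    have hA : ∀ z : W, b.repr E z ≠ 0 → bruhatLE cs z x := by
      intro z hz
      have hor : b.repr C' z ≠ 0 ∨ b.repr C' (cs.simple i * z) ≠ 0 := by
        by_contra hcc
        push_neg at hcc
        rw [hg z, hcc.1, hcc.2] at hz
        apply hz
        split_ifs <;> ring
      rcases hor with hc | hc
      · have hz' : bruhatLE cs z x' := by
          by_contra hcc
          exact hc (hC's z hcc)
        exact bruhatLE_trans cs hz' hxle
      · have hz' : bruhatLE cs (cs.simple i * z) x' := by
          by_contra hcc
          exact hc (hC's _ hcc)
        exact hkey z hz'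
    have hEx : b.repr E x = T (cs.length x : ℤ) := by
      rw [hg x]
      rw [if_neg (by rw [← hx']; omega)]
      have hcx : b.repr C' x = 0 := by
        apply hC's x
        intro hc
        have := bruhatLE_length_le cs hc
        omega
      rw [← hx', hcx, mul_zero, zero_add, hC'x, ← T_add]
      congr 1
      omega
    have hP : ∀ w : W, (T (-(cs.length w : ℤ)) * b.repr C' w ∈ NN) ∧
        (w ≠ x' → T (-(cs.length w : ℤ)) * b.repr C' w ∈ vZv) := by
      intro w
      by_cases hw : w = x'
      · subst hw
        rw [hC'x, ← T_add, show (-(cs.length x' : ℤ) + (cs.length x' : ℤ)) = 0 by ring, T_zero]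
        exact ⟨one_mem_NN, fun hc => absurd rfl hc⟩
      · by_cases hwle : bruhatLE cs w x'
        · have := hC'v w hwle hw
          exact ⟨vZv_le_NN this, fun _ => this⟩
        · rw [hC's w hwle, mul_zero]
          exact ⟨Submodule.zero_mem _, fun _ => Submodule.zero_mem _⟩
    have hgNN : ∀ z : W, z ≠ x → T (-(cs.length z : ℤ)) * b.repr E z ∈ NN := by
      intro z hzx
      rw [hg z]
      rcases cs.length_simple_mul z i with hzup | hzdn
      · rw [if_pos hzup, mul_add, T_mul_shuffle, T_mul_shuffle]
        apply Submodule.add_mem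
        · rw [show (-(cs.length z : ℤ) + 1) = 1 + -(cs.length z : ℤ) by ring, T_add,
            mul_assoc]
          exact vZv_le_NN (T_one_mul_mem_vZv (hP z).1)
        · rw [show (-(cs.length z : ℤ) + -1) = -(cs.length (cs.simple i * z) : ℤ) by omega]
          exact (hP (cs.simple i * z)).1
      · rw [if_neg (by omega), mul_add, T_mul_shuffle, T_mul_shuffle]
        apply Submodule.add_mem
        · rw [show (-(cs.length z : ℤ) + -1) = -1 + -(cs.length z : ℤ) by ring, T_add,
            mul_assoc]
          apply T_negone_mul_mem_NN
          apply (hP z).2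
          intro hc
          subst hc
          rw [← hxx'] at hzdn
          omega
        · rw [show (-(cs.length z : ℤ) + 1) = -(cs.length (cs.simple i * z) : ℤ) by omega]
          exact (hP (cs.simple i * z)).1
    set S : Finset W := (b.repr E).support.erase x with hS
    have hSmem : ∀ z ∈ S, bruhatLE cs z x ∧ z ≠ x ∧ cs.length z < cs.length x := by
      intro z hzS
      have h1 : z ≠ x := (Finset.mem_erase.mp hzS).1
      have h2 : b.repr E z ≠ 0 := Finsupp.mem_support_iff.mp (Finset.mem_erase.mp hzS).2
      have h3 := hA z h2
      exact ⟨h3, h1, (bruhatLE_eq_or_length_lt cs h3).resolve_left h1⟩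
    have hFex : ∀ z : W, ∃ Cz : H, cs.length z < cs.length x →
        (d Cz = Cz ∧
         (∀ y : W, ¬ bruhatLE cs y z → b.repr Cz y = 0) ∧
         b.repr Cz z = T (cs.length z : ℤ) ∧
         (∀ y : W, bruhatLE cs y z → y ≠ z →
           T (-(cs.length y : ℤ)) * b.repr Cz y ∈ vZv)) := by
      intro z
      by_cases hz : cs.length z < cs.length x
      · obtain ⟨Cz, h⟩ := ih (cs.length z) (by omega) z rfl
        exact ⟨Cz, fun _ => h⟩
      · exact ⟨0, fun hc => absurd hc hz⟩
    choose F hF using hFex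
    set μ : W → ℤ := fun z => ev 0 (T (-(cs.length z : ℤ)) * b.repr E z) with hμ
    refine ⟨E - ∑ z ∈ S, μ z • F z, ?_, ?_, ?_, ?_⟩
    case _ =>
      rw [map_sub, hEdef, map_mul, d_Cselt cs b hquad d hd_smul hd_basis i, hC'd, map_sum]
      congr 1
      apply Finset.sum_congr rfl
      intro z hz
      rw [map_zsmul, (hF z (hSmem z hz).2.2).1]
    all_goals {
      have hreprC : ∀ y : W, b.repr (E - ∑ z ∈ S, μ z • F z) y
          = b.repr E y - ∑ z ∈ S, μ z • b.repr (F z) y := by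
        intro y
        rw [map_sub, map_sum, Finsupp.sub_apply, Finset.sum_apply']
        congr 1
        apply Finset.sum_congr rfl
        intro z hz
        rw [map_zsmul, Finsupp.smul_apply]
      first
      | -- support condition
        ( intro y hy
          rw [hreprC y]
          have hcy : b.repr C' y = 0 := by
            apply hC's y
            intro hc
            exact hy (bruhatLE_trans cs hc hxle)
          have hcsy : b.repr C' (cs.simple i * y) = 0 := by
            apply hC's _
            intro hc
            exact hy (hkey y hc)
          have hEy : b.repr E y = 0 := by
            rw [hg y, hcy, hcsy]
            split_ifs <;> ring
          rw [hEy, zero_sub, neg_eq_zero]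
          apply Finset.sum_eq_zero
          intro z hz
          have hFz := hF z (hSmem z hz).2.2
          have : b.repr (F z) y = 0 := by
            apply hFz.2.1 y
            intro hc
            exact hy (bruhatLE_trans cs hc (hSmem z hz).1)
          rw [this, smul_zero] )
      | -- coefficient at x
        ( rw [hreprC x, hEx]
          have hsum0 : ∑ z ∈ S, μ z • b.repr (F z) x = 0 := by
            apply Finset.sum_eq_zero
            intro z hz
            have hFz := hF z (hSmem z hz).2.2
            have : b.repr (F z) x = 0 := by
              apply hFz.2.1 x
              intro hc
              have := bruhatLE_length_le cs hc
              have := (hSmem z hz).2.2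
              omega
            rw [this, smul_zero]
          rw [hsum0, sub_zero] )
      | -- vZv condition
        ( intro y hyle hyne
          rw [hreprC y, mul_sub, Finset.mul_sum]
          have hterm : ∀ z ∈ S, z ≠ y →
              T (-(cs.length y : ℤ)) * (μ z • b.repr (F z) y) ∈ vZv := by
            intro z hz hzy
            have hFz := hF z (hSmem z hz).2.2
            rw [mul_smul_comm]
            apply Submodule.smul_mem
            by_cases hylez : bruhatLE cs y z
            · exact hFz.2.2.2 y hylez (fun hc => hzy hc.symm)
            · rw [hFz.2.1 y hylez, mul_zero]
              exact Submodule.zero_mem _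
          by_cases hyS : y ∈ S
          · rw [← Finset.add_sum_erase S _ hyS]
            have hFy := hF y (hSmem y hyS).2.2
            have e1 : T (-(cs.length y : ℤ)) * (μ y • b.repr (F y) y)
                = C (μ y) := by
              rw [hFy.2.2.1, mul_smul_comm, ← T_add,
                show (-(cs.length y : ℤ) + (cs.length y : ℤ)) = 0 by ring, T_zero,
                zsmul_eq_mul, mul_one, eq_intCast (C : ℤ →+* LaurentPolynomial ℤ) (μ y)]
            have e2 : T (-(cs.length y : ℤ)) * b.repr E y
                - (T (-(cs.length y : ℤ)) * (μ y • b.repr (F y) y)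
                    + ∑ z ∈ S.erase y, T (-(cs.length y : ℤ)) * (μ z • b.repr (F z) y))
                = (T (-(cs.length y : ℤ)) * b.repr E y - C (μ y))
                  - ∑ z ∈ S.erase y, T (-(cs.length y : ℤ)) * (μ z • b.repr (F z) y) := by
              rw [e1]
              ring
            rw [e2]
            apply Submodule.sub_mem
            · have : μ y = ev 0 (T (-(cs.length y : ℤ)) * b.repr E y) := rfl
              rw [this]
              exact NN_sub_C_mem (hgNN y hyne)
            · apply Submodule.sum_mem
              intro z hz
              exact hterm z (Finset.mem_of_mem_erase hz) (Finset.ne_of_mem_erase hz)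
          · have hEy : b.repr E y = 0 := by
              by_contra hc
              exact hyS (Finset.mem_erase.mpr ⟨hyne, Finsupp.mem_support_iff.mpr hc⟩)
            rw [hEy, mul_zero, zero_sub]
            apply Submodule.neg_mem
            apply Submodule.sum_mem
            intro z hz
            apply hterm z hz
            intro hc
            exact hyS (hc ▸ hz) )
    }

end dual




end KLAux

/-- **Kazhdan–Lusztig basis.** Let `H` be the Hecke algebra of a Coxeter system
over `ℤ[v,v⁻¹]` (basis `{T_w = b w}`, `T_e = 1`, standard relations) with Kazhdan–Lusztig
involution `d` (a ring homomorphism, semilinear over `v ↦ v⁻¹`, `d(T_w) = (T_{w⁻¹})⁻¹`,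
`d² = id`).  Writing elements as `C = Σ_y h_{y}(v)·T̃_y` with `T̃_y = v^{l(y)} T_y` (so that
the coefficient of `T_y` in `C` is `v^{l(y)} h_y`, i.e. `h_y = v^{-l(y)}·(b.repr C) y`), for
every `x ∈ W` there is a unique `C'_x = C ∈ H` such that:
(1) `d(C) = C`;
(2) `h_y = 0` unless `y ≤ x` in Bruhat order, and `h_x = 1`;
(3) `h_y ∈ vℤ[v]` for `y < x`. -/
theorem stmt9 {B W : Type} [Group W] (M : CoxeterMatrix B) (cs : CoxeterSystem M W)
    {H : Type} [Ring H] [Algebra (LaurentPolynomial ℤ) H]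
    (b : Module.Basis W (LaurentPolynomial ℤ) H)
    (hone : b 1 = 1)
    (hmul : ∀ x y : W, cs.length (x * y) = cs.length x + cs.length y →
      b x * b y = b (x * y))
    (hquad : ∀ i : B, b (cs.simple i) * b (cs.simple i) =
      (T (-2) : LaurentPolynomial ℤ) • (1 : H) +
        ((T (-2) - 1 : LaurentPolynomial ℤ)) • b (cs.simple i))
    (d : H →+* H)
    (hd_smul : ∀ (r : LaurentPolynomial ℤ) (x : H),
      d (r • x) = (invert r : LaurentPolynomial ℤ) • d x)
    (hd_basis : ∀ w : W, d (b w) * b w⁻¹ = 1 ∧ b w⁻¹ * d (b w) = 1)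
    (hd_invol : ∀ x : H, d (d x) = x) :
    ∀ x : W, ∃! C : H,
      d C = C ∧
      (∀ y : W, ¬ bruhatLE cs y x → b.repr C y = 0) ∧
      b.repr C x = T (cs.length x : ℤ) ∧
      (∀ y : W, bruhatLE cs y x → y ≠ x →
        T (-(cs.length y : ℤ)) * b.repr C y ∈ vZv) := by
  intro x
  obtain ⟨C, hC⟩ := KLAux.KL_exists cs b hone hmul hquad d hd_smul hd_basis x
  refine ⟨C, hC, ?_⟩
  intro C₂ hC₂
  exact KLAux.KL_unique cs b hone hmul hquad d hd_smul hd_basis x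
    hC₂.1 hC₂.2.1 hC₂.2.2.1 hC₂.2.2.2 hC.1 hC.2.1 hC.2.2.1 hC.2.2.2
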